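/- If (F, δ) : C → D is a G-equivariant functor between categories equipped with G-actions and the underlying functor F is an equivalence of categories, then the induced functor (F, δ)^G : C^G → D^G on categories of G-equivariant objects is also an equivalence of categories. -/

import Mathlib

open CategoryTheory

universe v u v₂ u₂

structure GrpAction (G : Type*) [Group G] (C : Type u) [Category.{v} C] where
  F : G → C ⥤ C
  isEquiv : ∀ g : G, (F g).IsEquivalence
  ε : ∀ g h : G, F h ⋙ F g ≅ F (g * h)
  cocycle : ∀ (g h k : G) (X : C),
    (ε g h).hom.app ((F k).obj X) ≫ (ε (g * h) k).hom.app X ≫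
        eqToHom (by rw [mul_assoc]) =
      (F g).map ((ε h k).hom.app X) ≫ (ε g (h * k)).hom.app X

variable {G : Type*} [Group G] {C : Type u} [Category.{v} C] {D : Type u₂} [Category.{v₂} D]

structure EqvObj (A : GrpAction G C) where
  pt : C
  α : ∀ g : G, pt ≅ (A.F g).obj pt
  compat : ∀ g h : G, (α (g * h)).hom =
    (α g).hom ≫ (A.F g).map ((α h).hom) ≫ (A.ε g h).hom.app pt

instance (A : GrpAction G C) : Category (EqvObj A) where
  Hom M N := { f : M.pt ⟶ N.pt // ∀ g : G,
    f ≫ (N.α g).hom = (M.α g).hom ≫ (A.F g).map f }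
  id M := ⟨𝟙 M.pt, by intro g; simp⟩
  comp {M N P} f g := ⟨f.1 ≫ g.1, by
    intro h
    rw [Category.assoc, g.2, ← Category.assoc, f.2, Category.assoc, ← Functor.map_comp]⟩
  id_comp f := Subtype.ext (Category.id_comp f.1)
  comp_id f := Subtype.ext (Category.comp_id f.1)
  assoc f g h := Subtype.ext (Category.assoc f.1 g.1 h.1)

/-- A `G`-equivariant functor between categories with `G`-actions. -/
structure EqvFunctor (A : GrpAction G C) (B : GrpAction G D) where
  F : C ⥤ D
  δ : ∀ g : G, A.F g ⋙ F ≅ F ⋙ B.F g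
  compat : ∀ (g h : G) (X : C),
    F.map ((A.ε g h).hom.app X) ≫ (δ (g * h)).hom.app X =
      (δ g).hom.app ((A.F h).obj X) ≫ (B.F g).map ((δ h).hom.app X) ≫
        (B.ε g h).hom.app (F.obj X)

/-- The functor `(F, δ)^G` between categories of equivariant objects induced by a
`G`-equivariant functor. -/
def inducedFunctor {A : GrpAction G C} {B : GrpAction G D} (E : EqvFunctor A B) :
    EqvObj A ⥤ EqvObj B where
  obj M :=
  { pt := E.F.obj M.pt
    α := fun g => E.F.mapIso (M.α g) ≪≫ (E.δ g).app M.pt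
    compat := by
      intro g h
      simp only [Iso.trans_hom, Functor.mapIso_hom, Iso.app_hom]
      rw [M.compat g h]
      simp only [Functor.map_comp, Category.assoc]
      rw [E.compat g h M.pt]
      have nat := (E.δ g).hom.naturality (M.α h).hom
      simp only [Functor.comp_map] at nat
      rw [← Category.assoc ((E.δ g).hom.app M.pt), ← nat]
      simp [Category.assoc] }
  map {M N} f := ⟨E.F.map f.1, by
    intro g
    simp only [Iso.trans_hom, Functor.mapIso_hom, Iso.app_hom]
    rw [← Category.assoc, ← E.F.map_comp, f.2, E.F.map_comp, Category.assoc]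
    have nat := (E.δ g).hom.naturality f.1
    simp only [Functor.comp_map] at nat
    rw [nat, ← Category.assoc]⟩
  map_id M := Subtype.ext (E.F.map_id M.pt)
  map_comp f g := Subtype.ext (E.F.map_comp f.1 g.1)

/-- If `(F, δ) : C → D` is a `G`-equivariant functor between categories with
`G`-actions and the underlying functor `F` is an equivalence of categories, then the induced
functor `(F, δ)^G : C^G → D^G` on categories of `G`-equivariant objects is also an
equivalence of categories. -/
theorem inducedFunctor_isEquivalence {G : Type*} [Group G] {C : Type u} [Category.{v} C]
    {D : Type u₂} [Category.{v₂} D] {A : GrpAction G C} {B : GrpAction G D}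
    (E : EqvFunctor A B) (hE : E.F.IsEquivalence) :
    (_root_.inducedFunctor E).IsEquivalence := by
  haveI := hE
  haveI : (_root_.inducedFunctor E).Faithful := by
    constructor
    intro M N f g h
    exact Subtype.ext (E.F.map_injective (congrArg Subtype.val h))
  haveI : (_root_.inducedFunctor E).Full := by
    constructor
    intro M N f
    refine ⟨⟨E.F.preimage f.1, ?_⟩, ?_⟩
    · intro g
      apply E.F.map_injective
      have hf := f.2 g
      simp only [_root_.inducedFunctor, Iso.trans_hom, Functor.mapIso_hom, Iso.app_hom] at hf
      have nat := (E.δ g).hom.naturality (E.F.preimage f.1)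
      simp only [Functor.comp_map, E.F.map_preimage] at nat
      simp only [Functor.map_comp, E.F.map_preimage]
      rw [← cancel_mono ((E.δ g).hom.app N.pt)]
      rw [Category.assoc, Category.assoc, nat]
      simp only [← Category.assoc] at hf ⊢
      erw [E.F.map_preimage]
      exact hf
    · exact Subtype.ext (E.F.map_preimage f.1)
  haveI : (_root_.inducedFunctor E).EssSurj := by
    constructor
    intro Y
    set X := E.F.objPreimage Y.pt with hX
    set η : E.F.obj X ≅ Y.pt := E.F.objObjPreimageIso Y.pt with hη
    -- the candidate isomorphisms on X
    set α : ∀ g : G, X ≅ (A.F g).obj X := fun g =>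
      E.F.preimageIso (η ≪≫ Y.α g ≪≫ (B.F g).mapIso η.symm ≪≫ ((E.δ g).app X).symm)
      with hα
    have hFα : ∀ g : G, E.F.map (α g).hom ≫ (E.δ g).hom.app X =
        η.hom ≫ (Y.α g).hom ≫ (B.F g).map η.inv := by
      intro g
      simp [hα]
    refine ⟨⟨X, α, ?_⟩, ⟨?_⟩⟩
    · intro g h
      apply E.F.map_injective
      rw [← cancel_mono ((E.δ (g * h)).hom.app X)]
      rw [hFα]
      simp only [Functor.map_comp, Category.assoc]
      rw [E.compat g h X]
      have nat := (E.δ g).hom.naturality (α h).hom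
      simp only [Functor.comp_map] at nat
      slice_rhs 2 3 => rw [nat]
      slice_rhs 3 4 => rw [← Functor.map_comp, hFα h]
      conv_rhs => rw [← Category.assoc, hFα g]
      simp only [Functor.map_comp, Category.assoc]
      rw [← Functor.map_comp_assoc, η.inv_hom_id, CategoryTheory.Functor.map_id, Category.id_comp]
      have natε := (B.ε g h).hom.naturality η.inv
      simp only [Functor.comp_map] at natε
      rw [natε, Y.compat g h]
      simp [Category.assoc]
    · -- iso in EqvObj B between image and Y
      have cond : ∀ g : G, η.hom ≫ (Y.α g).hom =
          (E.F.mapIso (α g) ≪≫ (E.δ g).app X).hom ≫ (B.F g).map η.hom := by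
        intro g
        simp only [Iso.trans_hom, Functor.mapIso_hom, Iso.app_hom, Category.assoc]
        rw [← Category.assoc, hFα g]
        simp [Category.assoc, ← Functor.map_comp]
      refine ⟨⟨η.hom, fun g => by
        show η.hom ≫ (Y.α g).hom = (E.F.mapIso (α g) ≪≫ (E.δ g).app X).hom ≫ (B.F g).map η.hom
        exact cond g⟩, ⟨η.inv, ?_⟩, ?_, ?_⟩
      · intro g
        show η.inv ≫ (E.F.mapIso (α g) ≪≫ (E.δ g).app X).hom =
          (Y.α g).hom ≫ (B.F g).map η.inv
        rw [← cancel_epi η.hom, ← Category.assoc, η.hom_inv_id, Category.id_comp,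
          ← Category.assoc, cond g]
        simp [Category.assoc, ← Functor.map_comp]
      · exact Subtype.ext η.hom_inv_id
      · exact Subtype.ext η.inv_hom_id
  exact Functor.IsEquivalence.mk
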